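/- For internal nodes u, v of an ORB-tree T with covariance matrix S and Haar-like matrix Φ (columns φ_v), one has (Φ'SΦ)(u,v) = Σ_{i ∈ L(u)∩L(v)} φ_u(i) φ_v(i) ℓ*(i,v). In particular, (Φ'SΦ)(u,v) = 0 whenever L(u) ∩ L(v) = ∅. -/

import Mathlib

open Finset

noncomputable section
open scoped Classical

/-- A finite rooted tree on vertices `Fin n`, given by a parent function:
every vertex reaches the root by iterating `parent`, and the root is its own parent. -/
structure RTree where
  n : ℕ
  npos : 0 < n
  root : Fin n
  parent : Fin n → Fin n
  parent_root : parent root = root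
  reach : ∀ v, ∃ k, parent^[k] v = root

namespace RTree

variable (T : RTree)

/-- `u` is an ancestor of `v` (every vertex is an ancestor of itself). -/
def Anc (u v : Fin T.n) : Prop := ∃ k, T.parent^[k] v = u

/-- The children of a vertex. -/
def children (v : Fin T.n) : Finset (Fin T.n) :=
  Finset.univ.filter fun u => T.parent u = v ∧ u ≠ T.root

def IsLeaf (v : Fin T.n) : Prop := T.children v = ∅

/-- The leaf set of the tree. -/
def leaves : Finset (Fin T.n) := Finset.univ.filter fun v => T.IsLeaf v

/-- The internal (non-leaf) vertices; the root is internal. -/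
def internal : Finset (Fin T.n) := Finset.univ.filter fun v => ¬ T.IsLeaf v

/-- `L(v)`: the leaves descending from `v`. -/
def Ldesc (v : Fin T.n) : Finset (Fin T.n) := T.leaves.filter fun i => T.Anc v i

/-- Depth of a vertex: number of edges to the root. -/
def depth (v : Fin T.n) : ℕ := Nat.find (T.reach v)

/-- Number of vertices of the subtree rooted at `v`. -/
def subtreeSize (v : Fin T.n) : ℕ := (Finset.univ.filter fun u => T.Anc v u).card

/-- ORB-tree: the root has exactly one child and is not a leaf, and every other
internal vertex has exactly two children (so every vertex has degree 1 or 3). -/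
def IsORB : Prop :=
  ¬ T.IsLeaf T.root ∧ (T.children T.root).card = 1 ∧
  ∀ v, ¬ T.IsLeaf v → v ≠ T.root → (T.children v).card = 2

/-- The type of leaves. -/
abbrev Leaf := {i // i ∈ T.leaves}

/-- `δ_e` for the edge `e` above vertex `v`: the indicator vector of the leaves
descending from that edge. -/
def delta (v : Fin T.n) : T.Leaf → ℝ := fun i => if T.Anc v i.1 then 1 else 0

/-- The covariance matrix of the tree with branch lengths `ℓ`
(`ℓ v` is the length of the edge joining `v` to its parent):
`S = ∑_{e ∈ E} ℓ(e) δ_e δ_e'`.  Equivalently `S(i,j) = ∑_{e ∈ [i∧j,∘]} ℓ(e)`. -/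
def cov (ℓ : Fin T.n → ℝ) : Matrix T.Leaf T.Leaf ℝ :=
  ∑ v ∈ Finset.univ.filter (fun v => v ≠ T.root),
    ℓ v • Matrix.vecMulVec (T.delta v) (T.delta v)

/-- The trace branch length `ℓ*(i,v) = ∑_{e ∈ [i,v]} |L(e)| ℓ(e)`; the edge above `w`
lies on the path between `i` and `v` iff exactly one of `i`, `v` descends from `w`. -/
def lstar (ℓ : Fin T.n → ℝ) (i v : Fin T.n) : ℝ :=
  ∑ w ∈ Finset.univ.filter (fun w => w ≠ T.root ∧
      ((T.Anc w i ∧ ¬ T.Anc w v) ∨ (T.Anc w v ∧ ¬ T.Anc w i))),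
    ((T.Ldesc w).card : ℝ) * ℓ w

/-- `φ` is the family of Haar-like wavelets of `T`, indexed by internal vertices. -/
def IsHaarLike (φ : Fin T.n → T.Leaf → ℝ) : Prop :=
  (∀ i, φ T.root i = 1 / Real.sqrt ((T.leaves.card : ℝ))) ∧
  ∀ v ∈ T.internal, v ≠ T.root → ∃ c₀ c₁, c₀ ≠ c₁ ∧ T.children v = {c₀, c₁} ∧
    ∀ i : T.Leaf, φ v i =
      if i.1 ∈ T.Ldesc c₀ then
        Real.sqrt (((T.Ldesc c₁).card : ℝ) / (((T.Ldesc c₀).card : ℝ) * ((T.Ldesc v).card : ℝ)))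
      else if i.1 ∈ T.Ldesc c₁ then
        - Real.sqrt (((T.Ldesc c₀).card : ℝ) / (((T.Ldesc c₁).card : ℝ) * ((T.Ldesc v).card : ℝ)))
      else 0

/-- `T` is trace-balanced (at every non-root internal vertex). -/
def TraceBalanced (ℓ : Fin T.n → ℝ) : Prop :=
  ∀ v ∈ T.internal, v ≠ T.root → ∀ i ∈ T.Ldesc v, ∀ j ∈ T.Ldesc v,
    T.lstar ℓ i v = T.lstar ℓ j v

end RTree
namespace RTree

variable (T : RTree)

lemma anc_refl (v : Fin T.n) : T.Anc v v := ⟨0, rfl⟩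

lemma anc_trans {a b c : Fin T.n} (h1 : T.Anc a b) (h2 : T.Anc b c) : T.Anc a c := by
  obtain ⟨k, hk⟩ := h1; obtain ⟨m, hm⟩ := h2
  exact ⟨k + m, by rw [Function.iterate_add_apply, hm, hk]⟩

lemma anc_root (v : Fin T.n) : T.Anc T.root v := T.reach v

lemma root_iter (k : ℕ) : T.parent^[k] T.root = T.root :=
  Function.iterate_fixed T.parent_root k

lemma eq_root_of_anc_root {w : Fin T.n} (h : T.Anc w T.root) : w = T.root := by
  obtain ⟨k, hk⟩ := h; rw [T.root_iter] at hk; exact hk.symm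

lemma parent_fix {v : Fin T.n} (h : T.parent v = v) : v = T.root := by
  obtain ⟨K, hK⟩ := T.reach v
  rw [Function.iterate_fixed h] at hK; exact hK

lemma anc_antisymm {a b : Fin T.n} (h1 : T.Anc a b) (h2 : T.Anc b a) : a = b := by
  obtain ⟨k, hk⟩ := h1
  obtain ⟨m, hm⟩ := h2
  rcases Nat.eq_zero_or_pos k with h | h
  · subst h; simpa using hk.symm
  have hper : T.parent^[m + k] b = b := by
    rw [Function.iterate_add_apply, hk, hm]
  have hmul : ∀ t, T.parent^[(m + k) * t] b = b := by
    intro t; induction t with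
    | zero => simp
    | succ t ih => rw [Nat.mul_succ, Function.iterate_add_apply, hper, ih]
  obtain ⟨K, hK⟩ := T.reach b
  have hBroot : b = T.root := by
    calc b = T.parent^[(m + k) * K] b := (hmul K).symm
      _ = T.parent^[(m + k) * K - K] (T.parent^[K] b) := by
          rw [← Function.iterate_add_apply]
          congr 1
          have : K ≤ (m + k) * K := Nat.le_mul_of_pos_left K (by omega)
          omega
      _ = T.root := by rw [hK, T.root_iter]
  subst hBroot
  rw [T.root_iter] at hk
  exact (hk.symm.trans rfl)

lemma anc_comp {a b i : Fin T.n} (h1 : T.Anc a i) (h2 : T.Anc b i) :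
    T.Anc a b ∨ T.Anc b a := by
  obtain ⟨k, hk⟩ := h1; obtain ⟨m, hm⟩ := h2
  rcases le_total k m with h | h
  · right
    refine ⟨m - k, ?_⟩
    rw [← hk, ← Function.iterate_add_apply]
    rw [show m - k + k = m by omega]; exact hm
  · left
    refine ⟨k - m, ?_⟩
    rw [← hm, ← Function.iterate_add_apply]
    rw [show k - m + m = k by omega]; exact hk

lemma exists_child {v i : Fin T.n} (h : T.Anc v i) (hne : i ≠ v) (hvr : v ≠ T.root) :
    ∃ c, T.parent c = v ∧ T.Anc c i ∧ c ≠ T.root := by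
  obtain ⟨k, hk⟩ := h
  rcases Nat.eq_zero_or_pos k with h0 | h0
  · subst h0; exact absurd hk hne
  refine ⟨T.parent^[k - 1] i, ?_, ⟨k - 1, rfl⟩, ?_⟩
  · have : T.parent (T.parent^[k-1] i) = T.parent^[k-1+1] i :=
      (Function.iterate_succ_apply' T.parent (k-1) i).symm
    rw [this, show k - 1 + 1 = k by omega]; exact hk
  · intro hc
    apply hvr
    rw [← hk, ← show k - 1 + 1 = k by omega, Function.iterate_succ_apply', hc,
      T.parent_root]

lemma mem_children {c v : Fin T.n} : c ∈ T.children v ↔ T.parent c = v ∧ c ≠ T.root := by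
  simp [children]

lemma anc_of_parent {c v : Fin T.n} (h : T.parent c = v) : T.Anc v c := ⟨1, h⟩

lemma sibling_not_anc {a b : Fin T.n} (hne : a ≠ b) (hpar : T.parent a = T.parent b)
    (ha : a ≠ T.root) : ¬ T.Anc a b := by
  rintro ⟨k, hk⟩
  match k, hk with
  | 0, hk => exact hne hk.symm
  | k + 1, hk =>
    have h1 : T.Anc a (T.parent a) :=
      ⟨k, by rw [hpar, ← Function.iterate_succ_apply]; exact hk⟩
    have h2 : T.Anc (T.parent a) a := ⟨1, rfl⟩
    exact ha (T.parent_fix (T.anc_antisymm h1 h2).symm)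

lemma mem_Ldesc {i w : Fin T.n} : i ∈ T.Ldesc w ↔ i ∈ T.leaves ∧ T.Anc w i := by
  simp [Ldesc, Finset.mem_filter]

lemma leaf_mem_Ldesc (i : T.Leaf) (w : Fin T.n) : i.1 ∈ T.Ldesc w ↔ T.Anc w i.1 := by
  simp [T.mem_Ldesc, i.2]

lemma card_filter_leaf (p : Fin T.n → Prop) :
    (Finset.univ.filter (fun i : T.Leaf => p i.1)).card = (T.leaves.filter p).card := by
  apply Finset.card_bij (fun (a : T.Leaf) _ => a.1)
  · intro a ha
    exact Finset.mem_filter.mpr ⟨a.2, (Finset.mem_filter.mp ha).2⟩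
  · intro a _ b _ h; exact Subtype.ext h
  · intro b hb
    exact ⟨⟨b, (Finset.mem_filter.mp hb).1⟩,
      Finset.mem_filter.mpr ⟨Finset.mem_univ _, (Finset.mem_filter.mp hb).2⟩, rfl⟩

end RTree
namespace RTree

variable (T : RTree)

lemma child_facts {v c0 c1 : Fin T.n} (hc : T.children v = {c0, c1}) :
    (T.parent c0 = v ∧ c0 ≠ T.root) ∧ (T.parent c1 = v ∧ c1 ≠ T.root) := by
  constructor
  · exact T.mem_children.mp (hc ▸ Finset.mem_insert_self c0 {c1})
  · exact T.mem_children.mp (hc ▸ Finset.mem_insert_of_mem (Finset.mem_singleton_self c1))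

lemma children_anc_disjoint {v c0 c1 : Fin T.n} (hne : c0 ≠ c1)
    (hc : T.children v = {c0, c1}) {i : Fin T.n} (h0 : T.Anc c0 i) (h1 : T.Anc c1 i) :
    False := by
  obtain ⟨⟨hp0, hr0⟩, ⟨hp1, hr1⟩⟩ := T.child_facts hc
  rcases T.anc_comp h0 h1 with h | h
  · exact T.sibling_not_anc hne (hp0.trans hp1.symm) hr0 h
  · exact T.sibling_not_anc hne.symm (hp1.trans hp0.symm) hr1 h

lemma phi_support {φ : Fin T.n → T.Leaf → ℝ} (hφ : T.IsHaarLike φ) {v : Fin T.n}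
    (hv : v ∈ T.internal) {i : T.Leaf} (hni : ¬ T.Anc v i.1) : φ v i = 0 := by
  by_cases hvr : v = T.root
  · exact absurd (hvr ▸ T.anc_root i.1) hni
  obtain ⟨c0, c1, hne, hc, hval⟩ := hφ.2 v hv hvr
  obtain ⟨⟨hp0, _⟩, ⟨hp1, _⟩⟩ := T.child_facts hc
  rw [hval i, if_neg, if_neg]
  · intro h
    exact hni (T.anc_trans (T.anc_of_parent hp1) ((T.leaf_mem_Ldesc i c1).mp h))
  · intro h
    exact hni (T.anc_trans (T.anc_of_parent hp0) ((T.leaf_mem_Ldesc i c0).mp h))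

lemma phi_const {φ : Fin T.n → T.Leaf → ℝ} (hφ : T.IsHaarLike φ) {v : Fin T.n}
    (hv : v ∈ T.internal) {w : Fin T.n} (hvw : T.Anc v w) (hwv : w ≠ v)
    {i j : T.Leaf} (hi : T.Anc w i.1) (hj : T.Anc w j.1) : φ v i = φ v j := by
  by_cases hvr : v = T.root
  · rw [hvr, hφ.1 i, hφ.1 j]
  obtain ⟨c0, c1, hne, hc, hval⟩ := hφ.2 v hv hvr
  obtain ⟨c, hpc, hcw, hcr⟩ := T.exists_child hvw hwv hvr
  have hcmem : c = c0 ∨ c = c1 := by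
    have : c ∈ T.children v := T.mem_children.mpr ⟨hpc, hcr⟩
    rw [hc] at this
    simpa using this
  have hci : T.Anc c i.1 := T.anc_trans hcw hi
  have hcj : T.Anc c j.1 := T.anc_trans hcw hj
  rcases hcmem with rfl | rfl
  · rw [hval i, hval j, if_pos ((T.leaf_mem_Ldesc i c).mpr hci),
      if_pos ((T.leaf_mem_Ldesc j c).mpr hcj)]
  · have hi0 : i.1 ∉ T.Ldesc c0 := fun h =>
      T.children_anc_disjoint hne hc ((T.leaf_mem_Ldesc i c0).mp h) hci
    have hj0 : j.1 ∉ T.Ldesc c0 := fun h =>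
      T.children_anc_disjoint hne hc ((T.leaf_mem_Ldesc j c0).mp h) hcj
    rw [hval i, hval j, if_neg hi0, if_neg hj0,
      if_pos ((T.leaf_mem_Ldesc i c).mpr hci), if_pos ((T.leaf_mem_Ldesc j c).mpr hcj)]

lemma Ldesc_eq_union {v c0 c1 : Fin T.n} (hv : v ∈ T.internal) (hvr : v ≠ T.root)
    (hc : T.children v = {c0, c1}) :
    T.Ldesc v = T.Ldesc c0 ∪ T.Ldesc c1 := by
  obtain ⟨⟨hp0, _⟩, ⟨hp1, _⟩⟩ := T.child_facts hc
  ext i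
  simp only [Finset.mem_union, T.mem_Ldesc]
  constructor
  · rintro ⟨hil, hanc⟩
    have hiv : i ≠ v := by
      rintro rfl
      have h1 : T.IsLeaf i := by simpa [leaves] using hil
      have h2 : ¬ T.IsLeaf i := by simpa [internal] using hv
      exact h2 h1
    obtain ⟨c, hpc, hcw, hcr⟩ := T.exists_child hanc hiv hvr
    have : c ∈ T.children v := T.mem_children.mpr ⟨hpc, hcr⟩
    rw [hc] at this
    have hcc : c = c0 ∨ c = c1 := by simpa using this
    rcases hcc with rfl | rfl
    · exact Or.inl ⟨hil, hcw⟩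
    · exact Or.inr ⟨hil, hcw⟩
  · rintro (⟨hil, hanc⟩ | ⟨hil, hanc⟩)
    · exact ⟨hil, T.anc_trans (T.anc_of_parent hp0) hanc⟩
    · exact ⟨hil, T.anc_trans (T.anc_of_parent hp1) hanc⟩

lemma Ldesc_card_add {v c0 c1 : Fin T.n} (hv : v ∈ T.internal) (hvr : v ≠ T.root)
    (hne : c0 ≠ c1) (hc : T.children v = {c0, c1}) :
    (T.Ldesc v).card = (T.Ldesc c0).card + (T.Ldesc c1).card := by
  rw [T.Ldesc_eq_union hv hvr hc, Finset.card_union_of_disjoint]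
  rw [Finset.disjoint_left]
  intro i h0 h1
  exact T.children_anc_disjoint hne hc ((T.mem_Ldesc.mp h0).2) ((T.mem_Ldesc.mp h1).2)

lemma card_leaf_desc (w : Fin T.n) :
    (Finset.univ.filter (fun i : T.Leaf => T.Anc w i.1)).card = (T.Ldesc w).card := by
  apply Finset.card_bij (fun (a : T.Leaf) _ => a.1)
  · intro a ha
    exact T.mem_Ldesc.mpr ⟨a.2, (Finset.mem_filter.mp ha).2⟩
  · intro a _ b _ h; exact Subtype.ext h
  · intro b hb
    exact ⟨⟨b, (T.mem_Ldesc.mp hb).1⟩,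
      Finset.mem_filter.mpr ⟨Finset.mem_univ _, (T.mem_Ldesc.mp hb).2⟩, rfl⟩

lemma sum_indicator_Ldesc (w : Fin T.n) :
    ∑ i : T.Leaf, (if T.Anc w i.1 then (1:ℝ) else 0) = ((T.Ldesc w).card : ℝ) := by
  rw [← Finset.sum_filter, Finset.sum_const, nsmul_eq_mul, mul_one, T.card_leaf_desc]

lemma phi_sum_zero {φ : Fin T.n → T.Leaf → ℝ} (hφ : T.IsHaarLike φ) {v : Fin T.n}
    (hv : v ∈ T.internal) (hvr : v ≠ T.root) : ∑ i : T.Leaf, φ v i = 0 := by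
  obtain ⟨c0, c1, hne, hc, hval⟩ := hφ.2 v hv hvr
  set n0 : ℝ := ((T.Ldesc c0).card : ℝ) with hn0
  set n1 : ℝ := ((T.Ldesc c1).card : ℝ) with hn1
  set nv : ℝ := ((T.Ldesc v).card : ℝ) with hnv
  have hrw : ∀ i : T.Leaf, φ v i =
      Real.sqrt (n1 / (n0 * nv)) * (if T.Anc c0 i.1 then (1:ℝ) else 0)
      - Real.sqrt (n0 / (n1 * nv)) * (if T.Anc c1 i.1 then (1:ℝ) else 0) := by
    intro i
    rw [hval i]
    simp only [T.leaf_mem_Ldesc]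
    by_cases h0 : i.1 ∈ T.Ldesc c0
    · have h1 : i.1 ∉ T.Ldesc c1 := fun h =>
        T.children_anc_disjoint hne hc ((T.leaf_mem_Ldesc i c0).mp h0)
          ((T.leaf_mem_Ldesc i c1).mp h)
      simp only [T.leaf_mem_Ldesc] at h0 h1
      simp [h0, h1]
    · by_cases h1 : i.1 ∈ T.Ldesc c1
      · simp only [T.leaf_mem_Ldesc] at h0 h1
        simp [h0, h1]
      · simp only [T.leaf_mem_Ldesc] at h0 h1
        simp [h0, h1]
  rw [Finset.sum_congr rfl (fun i _ => hrw i), Finset.sum_sub_distrib,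
    ← Finset.mul_sum, ← Finset.mul_sum, T.sum_indicator_Ldesc, T.sum_indicator_Ldesc]
  rw [← hn0, ← hn1, sub_eq_zero]
  have hsum : nv = n0 + n1 := by
    rw [hnv, hn0, hn1, T.Ldesc_card_add hv hvr hne hc]; push_cast; ring
  have h0nn : 0 ≤ n0 := by positivity
  have h1nn : 0 ≤ n1 := by positivity
  rcases eq_or_lt_of_le h0nn with h0 | h0
  · rw [← h0]
    simp [zero_div, Real.sqrt_zero]
  rcases eq_or_lt_of_le h1nn with h1 | h1
  · rw [← h1]
    simp [zero_div, Real.sqrt_zero]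
  have hnvpos : 0 < nv := by rw [hsum]; linarith
  rw [show n0 = Real.sqrt (n0 ^ 2) by rw [Real.sqrt_sq h0nn],
    show n1 = Real.sqrt (n1 ^ 2) by rw [Real.sqrt_sq h1nn],
    ← Real.sqrt_mul (by positivity), ← Real.sqrt_mul (by positivity)]
  congr 1
  field_simp
  simp only [Real.sqrt_sq h0nn, Real.sqrt_sq h1nn]

end RTree
namespace RTree

variable (T : RTree)

lemma key_lemma {φ : Fin T.n → T.Leaf → ℝ} (hφ : T.IsHaarLike φ) {u v : Fin T.n}
    (hu : u ∈ T.internal) (hv : v ∈ T.internal) {w : Fin T.n} (hw : w ≠ T.root) :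
    (∑ j : T.Leaf, φ u j * T.delta w j) * (∑ i : T.Leaf, T.delta w i * φ v i)
      = ((T.Ldesc w).card : ℝ) *
        ∑ i ∈ Finset.univ.filter (fun i : T.Leaf =>
            (i.1 ∈ T.Ldesc u ∩ T.Ldesc v) ∧ T.Anc w i.1 ∧ ¬ T.Anc w v),
          φ u i * φ v i := by
  by_cases hwv : T.Anc w v
  · have hvr : v ≠ T.root := fun h => hw (T.eq_root_of_anc_root (h ▸ hwv))
    have hB : (∑ i : T.Leaf, T.delta w i * φ v i) = 0 := by
      have hterm : ∀ i : T.Leaf, T.delta w i * φ v i = φ v i := by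
        intro i
        by_cases h : T.Anc w i.1
        · simp [delta, h]
        · have hnv : ¬ T.Anc v i.1 := fun hvi => h (T.anc_trans hwv hvi)
          rw [T.phi_support hφ hv hnv]
          simp
      rw [Finset.sum_congr rfl (fun i _ => hterm i)]
      exact T.phi_sum_zero hφ hv hvr
    have hfil : Finset.univ.filter (fun i : T.Leaf =>
        (i.1 ∈ T.Ldesc u ∩ T.Ldesc v) ∧ T.Anc w i.1 ∧ ¬ T.Anc w v) = ∅ := by
      apply Finset.filter_false_of_mem
      rintro i - ⟨-, -, h⟩
      exact h hwv
    rw [hB, hfil, mul_zero, Finset.sum_empty, mul_zero]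
  by_cases hvw : T.Anc v w
  · -- w is a strict descendant of v
    have hwv' : w ≠ v := fun h => hwv (h ▸ T.anc_refl w)
    have hA : (∑ j : T.Leaf, φ u j * T.delta w j)
        = ∑ j ∈ Finset.univ.filter (fun i : T.Leaf => T.Anc w i.1), φ u j := by
      rw [Finset.sum_filter]
      refine Finset.sum_congr rfl fun j _ => ?_
      by_cases h : T.Anc w j.1 <;> simp [delta, h]
    have hB : (∑ i : T.Leaf, T.delta w i * φ v i)
        = ∑ i ∈ Finset.univ.filter (fun i : T.Leaf => T.Anc w i.1), φ v i := by
      rw [Finset.sum_filter]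
      refine Finset.sum_congr rfl fun i _ => ?_
      by_cases h : T.Anc w i.1 <;> simp [delta, h]
    have hS : Finset.univ.filter (fun i : T.Leaf =>
        (i.1 ∈ T.Ldesc u ∩ T.Ldesc v) ∧ T.Anc w i.1 ∧ ¬ T.Anc w v)
        = Finset.univ.filter (fun i : T.Leaf => T.Anc w i.1 ∧ T.Anc u i.1) := by
      apply Finset.filter_congr
      intro i _
      simp only [Finset.mem_inter, T.leaf_mem_Ldesc, hwv, not_false_iff, and_true]
      constructor
      · rintro ⟨⟨hui, -⟩, hwi⟩
        exact ⟨hwi, hui⟩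
      · rintro ⟨hwi, hui⟩
        exact ⟨⟨hui, T.anc_trans hvw hwi⟩, hwi⟩
    have hSW : ∑ i ∈ Finset.univ.filter (fun i : T.Leaf => T.Anc w i.1 ∧ T.Anc u i.1),
          φ u i * φ v i
        = ∑ i ∈ Finset.univ.filter (fun i : T.Leaf => T.Anc w i.1), φ u i * φ v i := by
      rw [← Finset.filter_filter]
      apply Finset.sum_filter_of_ne
      intro i _ hne0
      by_contra h
      exact hne0 (by rw [T.phi_support hφ hu h, zero_mul])
    have hconst : ∀ i ∈ Finset.univ.filter (fun i : T.Leaf => T.Anc w i.1),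
        ∀ j ∈ Finset.univ.filter (fun i : T.Leaf => T.Anc w i.1), φ v i = φ v j := by
      intro i hi j hj
      exact T.phi_const hφ hv hvw hwv' (Finset.mem_filter.mp hi).2 (Finset.mem_filter.mp hj).2
    rw [hA, hB, hS, hSW, ← T.card_leaf_desc]
    set W := Finset.univ.filter (fun i : T.Leaf => T.Anc w i.1) with hW
    calc (∑ j ∈ W, φ u j) * (∑ i ∈ W, φ v i)
        = ∑ j ∈ W, ∑ i ∈ W, φ u j * φ v i := Finset.sum_mul_sum W W _ _
      _ = ∑ j ∈ W, ∑ i ∈ W, φ u j * φ v j := by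
          refine Finset.sum_congr rfl fun j hj => Finset.sum_congr rfl fun i hi => ?_
          rw [hconst i hi j hj]
      _ = ∑ j ∈ W, (W.card : ℝ) * (φ u j * φ v j) := by
          refine Finset.sum_congr rfl fun j _ => ?_
          rw [Finset.sum_const, nsmul_eq_mul]
      _ = (W.card : ℝ) * ∑ j ∈ W, φ u j * φ v j := by rw [Finset.mul_sum]
  · -- w and v are incomparable
    have hB : (∑ i : T.Leaf, T.delta w i * φ v i) = 0 := by
      apply Finset.sum_eq_zero
      intro i _
      by_cases h : T.Anc w i.1
      · have hnv : ¬ T.Anc v i.1 := by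
          intro hvi
          rcases T.anc_comp h hvi with hh | hh
          exacts [hwv hh, hvw hh]
        rw [T.phi_support hφ hv hnv, mul_zero]
      · simp [delta, h]
    have hfil : Finset.univ.filter (fun i : T.Leaf =>
        (i.1 ∈ T.Ldesc u ∩ T.Ldesc v) ∧ T.Anc w i.1 ∧ ¬ T.Anc w v) = ∅ := by
      apply Finset.filter_false_of_mem
      rintro i - ⟨hmem, hwi, -⟩
      have hvi : T.Anc v i.1 := (T.leaf_mem_Ldesc i v).mp (Finset.mem_inter.mp hmem).2
      rcases T.anc_comp hwi hvi with hh | hh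
      exacts [hwv hh, hvw hh]
    rw [hB, hfil, mul_zero, Finset.sum_empty, mul_zero]

end RTree
/-- `(Φ'SΦ)(u,v) = ∑_{i ∈ L(u) ∩ L(v)} φ_u(i) φ_v(i) ℓ*(i,v)`; in particular the
entry vanishes whenever `L(u) ∩ L(v) = ∅`. -/
theorem haarLike_conj_entry (T : RTree) (hT : T.IsORB) (ℓ : Fin T.n → ℝ)
    (hℓ : ∀ v, 0 ≤ ℓ v) (hℓpos : ∀ v, T.IsLeaf v → 0 < ℓ v)
    (φ : Fin T.n → T.Leaf → ℝ) (hφ : T.IsHaarLike φ) :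
    ∀ u ∈ T.internal, ∀ v ∈ T.internal,
      ((∑ j : T.Leaf, ∑ i : T.Leaf, φ u j * T.cov ℓ j i * φ v i) =
        ∑ i ∈ Finset.univ.filter
            (fun i : T.Leaf => i.1 ∈ T.Ldesc u ∩ T.Ldesc v),
          φ u i * φ v i * T.lstar ℓ i.1 v) ∧
      (T.Ldesc u ∩ T.Ldesc v = ∅ →
        (∑ j : T.Leaf, ∑ i : T.Leaf, φ u j * T.cov ℓ j i * φ v i) = 0) := by
  intro u hu v hv
  have hcov : ∀ j i : T.Leaf, T.cov ℓ j i =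
      ∑ w ∈ Finset.univ.filter (fun w => w ≠ T.root),
        ℓ w * (T.delta w j * T.delta w i) := by
    intro j i
    simp [RTree.cov, Matrix.sum_apply, Matrix.smul_apply, Matrix.vecMulVec_apply,
      smul_eq_mul, mul_assoc]
  have hfact : ∀ (A B : T.Leaf → ℝ) (c : ℝ),
      (∑ j : T.Leaf, ∑ i : T.Leaf, A j * B i * c)
        = (∑ j : T.Leaf, A j) * (∑ i : T.Leaf, B i) * c := by
    intro A B c
    rw [Finset.sum_mul_sum, Finset.sum_mul]
    exact Finset.sum_congr rfl fun j _ => (Finset.sum_mul _ _ _).symm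
  have lhs_eq : (∑ j : T.Leaf, ∑ i : T.Leaf, φ u j * T.cov ℓ j i * φ v i) =
      ∑ w ∈ Finset.univ.filter (fun w => w ≠ T.root),
        ((T.Ldesc w).card : ℝ) *
          (∑ i ∈ Finset.univ.filter (fun i : T.Leaf =>
            (i.1 ∈ T.Ldesc u ∩ T.Ldesc v) ∧ T.Anc w i.1 ∧ ¬ T.Anc w v),
            φ u i * φ v i) * ℓ w := by
    calc (∑ j : T.Leaf, ∑ i : T.Leaf, φ u j * T.cov ℓ j i * φ v i)
        = ∑ j : T.Leaf, ∑ i : T.Leaf, ∑ w ∈ Finset.univ.filter (fun w => w ≠ T.root),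
            (φ u j * T.delta w j) * (T.delta w i * φ v i) * ℓ w := by
          refine Finset.sum_congr rfl fun j _ => Finset.sum_congr rfl fun i _ => ?_
          rw [hcov, Finset.mul_sum, Finset.sum_mul]
          exact Finset.sum_congr rfl fun w _ => by ring
      _ = ∑ j : T.Leaf, ∑ w ∈ Finset.univ.filter (fun w => w ≠ T.root), ∑ i : T.Leaf,
            (φ u j * T.delta w j) * (T.delta w i * φ v i) * ℓ w :=
          Finset.sum_congr rfl fun j _ => Finset.sum_comm
      _ = ∑ w ∈ Finset.univ.filter (fun w => w ≠ T.root), ∑ j : T.Leaf, ∑ i : T.Leaf,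
            (φ u j * T.delta w j) * (T.delta w i * φ v i) * ℓ w := Finset.sum_comm
      _ = ∑ w ∈ Finset.univ.filter (fun w => w ≠ T.root),
            (∑ j : T.Leaf, φ u j * T.delta w j) * (∑ i : T.Leaf, T.delta w i * φ v i)
              * ℓ w :=
          Finset.sum_congr rfl fun w _ => hfact _ _ _
      _ = ∑ w ∈ Finset.univ.filter (fun w => w ≠ T.root),
            ((T.Ldesc w).card : ℝ) *
              (∑ i ∈ Finset.univ.filter (fun i : T.Leaf =>
                (i.1 ∈ T.Ldesc u ∩ T.Ldesc v) ∧ T.Anc w i.1 ∧ ¬ T.Anc w v),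
                φ u i * φ v i) * ℓ w := by
          refine Finset.sum_congr rfl fun w hw => ?_
          rw [T.key_lemma hφ hu hv (Finset.mem_filter.mp hw).2]
  have rhs_eq : (∑ i ∈ Finset.univ.filter
        (fun i : T.Leaf => i.1 ∈ T.Ldesc u ∩ T.Ldesc v),
        φ u i * φ v i * T.lstar ℓ i.1 v) =
      ∑ w ∈ Finset.univ.filter (fun w => w ≠ T.root),
        ((T.Ldesc w).card : ℝ) *
          (∑ i ∈ Finset.univ.filter (fun i : T.Leaf =>
            (i.1 ∈ T.Ldesc u ∩ T.Ldesc v) ∧ T.Anc w i.1 ∧ ¬ T.Anc w v),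
            φ u i * φ v i) * ℓ w := by
    calc (∑ i ∈ Finset.univ.filter
          (fun i : T.Leaf => i.1 ∈ T.Ldesc u ∩ T.Ldesc v),
          φ u i * φ v i * T.lstar ℓ i.1 v)
        = ∑ i ∈ Finset.univ.filter
            (fun i : T.Leaf => i.1 ∈ T.Ldesc u ∩ T.Ldesc v), ∑ w : Fin T.n,
            if w ≠ T.root ∧ T.Anc w i.1 ∧ ¬ T.Anc w v
            then φ u i * φ v i * (((T.Ldesc w).card : ℝ) * ℓ w) else 0 := by
          refine Finset.sum_congr rfl fun i hi => ?_
          have hiv : T.Anc v i.1 := (T.leaf_mem_Ldesc i v).mp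
            (Finset.mem_inter.mp (Finset.mem_filter.mp hi).2).2
          rw [RTree.lstar, Finset.mul_sum, Finset.sum_filter]
          refine Finset.sum_congr rfl fun w _ => ?_
          refine if_congr ?_ rfl rfl
          constructor
          · rintro ⟨h1, h2 | h2⟩
            · exact ⟨h1, h2⟩
            · exact absurd (T.anc_trans h2.1 hiv) h2.2
          · rintro ⟨h1, h2, h3⟩
            exact ⟨h1, Or.inl ⟨h2, h3⟩⟩
      _ = ∑ w : Fin T.n, ∑ i ∈ Finset.univ.filter
            (fun i : T.Leaf => i.1 ∈ T.Ldesc u ∩ T.Ldesc v),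
            if w ≠ T.root ∧ T.Anc w i.1 ∧ ¬ T.Anc w v
            then φ u i * φ v i * (((T.Ldesc w).card : ℝ) * ℓ w) else 0 :=
          Finset.sum_comm
      _ = ∑ w ∈ Finset.univ.filter (fun w => w ≠ T.root),
            ((T.Ldesc w).card : ℝ) *
              (∑ i ∈ Finset.univ.filter (fun i : T.Leaf =>
                (i.1 ∈ T.Ldesc u ∩ T.Ldesc v) ∧ T.Anc w i.1 ∧ ¬ T.Anc w v),
                φ u i * φ v i) * ℓ w := by
          rw [Finset.sum_filter]
          refine Finset.sum_congr rfl fun w _ => ?_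
          by_cases hw : w = T.root
          · rw [if_neg (by simp [hw])]
            apply Finset.sum_eq_zero
            intro i _
            rw [if_neg]
            rintro ⟨h1, -⟩
            exact h1 hw
          · rw [if_pos hw]
            have hstep : ∀ i ∈ Finset.univ.filter
                (fun i : T.Leaf => i.1 ∈ T.Ldesc u ∩ T.Ldesc v),
                (if w ≠ T.root ∧ T.Anc w i.1 ∧ ¬ T.Anc w v
                  then φ u i * φ v i * (((T.Ldesc w).card : ℝ) * ℓ w) else 0)
                = (if T.Anc w i.1 ∧ ¬ T.Anc w v
                  then φ u i * φ v i * (((T.Ldesc w).card : ℝ) * ℓ w) else 0) :=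
              fun i _ => if_congr (by tauto) rfl rfl
            rw [Finset.sum_congr rfl hstep, ← Finset.sum_filter, Finset.filter_filter,
              ← Finset.sum_mul]
            ring
  refine ⟨lhs_eq.trans rhs_eq.symm.symm.symm, fun hempty => ?_⟩
  rw [lhs_eq.trans rhs_eq.symm]
  apply Finset.sum_eq_zero
  intro i hi
  rw [hempty] at hi
  simp at hi
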